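/- Let $g^{ab}$ be the $B_l$ orbit-space metric components as quasihomogeneous polynomials in $y^1,\dots,y^l$ with $\deg y^p = p$ and $\deg g^{ab} = a+b-1$, each of polynomial degree at most 2. If indices satisfy $a \ge k+l+1-\gamma$, $b \ge k+l+1-\delta$, $c \le \alpha$ with $k+1 \le \gamma,\delta \le l$, $1 \le \alpha \le k$, and $\gamma+\delta \le k+l$, then $\frac{\partial g^{ab}}{\partial y^c} = 0$. -/

import Mathlib

open MvPolynomial

/-- Degree-counting vanishing: let `G` be a polynomial in the variables `y^1, …, y^l`
(the variable indexed by `m : ℕ` standing for `y^m`, so `G.vars ⊆ [1, l]`), quasihomogeneous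
of weighted degree `a + b - 1` for the weights `deg y^p = p`, and of total degree at most `2`.
If `a ≥ k+l+1-γ`, `b ≥ k+l+1-δ`, `c ≤ α` with `k+1 ≤ γ, δ ≤ l`, `1 ≤ α ≤ k` and
`γ + δ ≤ k + l`, then `∂G/∂y^c = 0`. -/
theorem stmt5 (l k α γ δ a b c : ℕ)
    (hγ1 : k + 1 ≤ γ) (hγ2 : γ ≤ l) (hδ1 : k + 1 ≤ δ) (hδ2 : δ ≤ l)
    (hα1 : 1 ≤ α) (hα2 : α ≤ k) (hγδ : γ + δ ≤ k + l)
    (ha : k + l + 1 - γ ≤ a) (hb : k + l + 1 - δ ≤ b)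
    (hc1 : 1 ≤ c) (hc2 : c ≤ α)
    (G : MvPolynomial ℕ ℚ)
    (hvars : G.vars ⊆ Finset.Icc 1 l)
    (hhom : G.IsWeightedHomogeneous (id : ℕ → ℕ) (a + b - 1))
    (hdeg : G.totalDegree ≤ 2) :
    pderiv c G = 0 := by
  apply pderiv_eq_zero_of_notMem_vars
  intro hmem
  rw [mem_vars] at hmem
  obtain ⟨d, hd, hcd⟩ := hmem
  have key : ∀ i ∈ d.support, i ≤ l := fun i hi =>
    (Finset.mem_Icc.mp (hvars ((mem_vars i).mpr ⟨d, hd, hi⟩))).2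
  have hcl : c ≤ l := key c hcd
  have hdc : 1 ≤ d c := Nat.one_le_iff_ne_zero.mpr (Finsupp.mem_support_iff.mp hcd)
  have hsum : (∑ i ∈ d.support, d i) ≤ 2 := le_trans (le_totalDegree hd) hdeg
  have hw : (Finsupp.weight (id : ℕ → ℕ) d : ℕ) = a + b - 1 :=
    hhom (mem_support_iff.mp hd)
  have hweq : (Finsupp.weight (id : ℕ → ℕ) d : ℕ) = ∑ i ∈ d.support, d i * i := by
    rw [Finsupp.weight_apply, Finsupp.sum]
    simp [smul_eq_mul]
  have hb1 : (∑ i ∈ d.support, d i * i) + (l - c) * d c ≤ ∑ i ∈ d.support, d i * l := by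
    calc (∑ i ∈ d.support, d i * i) + (l - c) * d c
        ≤ (∑ i ∈ d.support, d i * i) + ∑ i ∈ d.support, (l - i) * d i := by
          apply add_le_add_right
          exact Finset.single_le_sum (f := fun i => (l - i) * d i) (fun i _ => Nat.zero_le _) hcd
      _ = ∑ i ∈ d.support, (d i * i + (l - i) * d i) := by
          rw [Finset.sum_add_distrib]
      _ ≤ ∑ i ∈ d.support, d i * l := by
          apply Finset.sum_le_sum
          intro i hi
          have hil := key i hi
          have : i + (l - i) = l := by omega
          rw [mul_comm (l - i), ← Nat.mul_add, this]
  have hb2 : (∑ i ∈ d.support, d i * l) ≤ 2 * l := by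
    rw [← Finset.sum_mul]
    exact Nat.mul_le_mul_right l hsum
  have hlc : l - c ≤ (l - c) * d c := Nat.le_mul_of_pos_right _ hdc
  omega
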